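/- Let m₁, m₂, d > 0 and let x, y, p_x, p_y : ℝ → ℝ be differentiable functions such that (x(t), y(t)) ≠ (−d, 0) and (x(t), y(t)) ≠ (d, 0) for all t, satisfying Hamilton's equations for the two-center Hamiltonian: x' = p_x, y' = p_y, p_x' = −m₁(x+d)/((x+d)² + y²)^{3/2} − m₂(x−d)/((x−d)² + y²)^{3/2}, p_y' = −m₁ y/((x+d)² + y²)^{3/2} − m₂ y/((x−d)² + y²)^{3/2}. Then Euler's function G(t) = (1/2)(x(t) p_y(t) − y(t) p_x(t))² + (1/2) d² p_x(t)² + d·x(t)·( m₁/√((x(t)+d)² + y(t)²) − m₂/√((x(t)−d)² + y(t)²) ) is constant in t. (Euler's second integral of the two-center problem.) -/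

import Mathlib

/-- Euler's second integral `G` of the two-center problem is constant along solutions of
Hamilton's equations for the two-center Hamiltonian. -/
theorem euler_integral_constant (m₁ m₂ d : ℝ) (hm₁ : 0 < m₁) (hm₂ : 0 < m₂) (hd : 0 < d)
    (x y px py : ℝ → ℝ)
    (hne₁ : ∀ t, (x t, y t) ≠ (-d, 0))
    (hne₂ : ∀ t, (x t, y t) ≠ (d, 0))
    (hx : ∀ t, HasDerivAt x (px t) t)
    (hy : ∀ t, HasDerivAt y (py t) t)
    (hpx : ∀ t, HasDerivAt px
      (-(m₁ * (x t + d) / ((x t + d) ^ 2 + y t ^ 2) ^ ((3 : ℝ) / 2))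
        - m₂ * (x t - d) / ((x t - d) ^ 2 + y t ^ 2) ^ ((3 : ℝ) / 2)) t)
    (hpy : ∀ t, HasDerivAt py
      (-(m₁ * y t / ((x t + d) ^ 2 + y t ^ 2) ^ ((3 : ℝ) / 2))
        - m₂ * y t / ((x t - d) ^ 2 + y t ^ 2) ^ ((3 : ℝ) / 2)) t) :
    ∀ t s : ℝ,
      (1 / 2) * (x t * py t - y t * px t) ^ 2 + (1 / 2) * d ^ 2 * px t ^ 2
        + d * x t * (m₁ / Real.sqrt ((x t + d) ^ 2 + y t ^ 2)
          - m₂ / Real.sqrt ((x t - d) ^ 2 + y t ^ 2))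
      = (1 / 2) * (x s * py s - y s * px s) ^ 2 + (1 / 2) * d ^ 2 * px s ^ 2
        + d * x s * (m₁ / Real.sqrt ((x s + d) ^ 2 + y s ^ 2)
          - m₂ / Real.sqrt ((x s - d) ^ 2 + y s ^ 2)) := by
  set G : ℝ → ℝ := fun t =>
      (1 / 2) * (x t * py t - y t * px t) ^ 2 + (1 / 2) * d ^ 2 * px t ^ 2
        + d * x t * (m₁ / Real.sqrt ((x t + d) ^ 2 + y t ^ 2)
          - m₂ / Real.sqrt ((x t - d) ^ 2 + y t ^ 2)) with hG
  have key : ∀ t, HasDerivAt G 0 t := by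
    intro t
    -- positivity of the two squared distances
    have hu : 0 < (x t + d) ^ 2 + y t ^ 2 := by
      rcases eq_or_ne (y t) 0 with h0 | h0
      · have : x t + d ≠ 0 := by
          intro h
          exact hne₁ t (by simp [Prod.ext_iff, h0]; linarith)
        nlinarith [sq_nonneg (y t), sq_pos_of_ne_zero this]
      · nlinarith [sq_nonneg (x t + d), sq_pos_of_ne_zero h0]
    have hv : 0 < (x t - d) ^ 2 + y t ^ 2 := by
      rcases eq_or_ne (y t) 0 with h0 | h0
      · have : x t - d ≠ 0 := by
          intro h
          exact hne₂ t (by simp [Prod.ext_iff, h0]; linarith)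
        nlinarith [sq_nonneg (y t), sq_pos_of_ne_zero this]
      · nlinarith [sq_nonneg (x t - d), sq_pos_of_ne_zero h0]
    set s₁ : ℝ := Real.sqrt ((x t + d) ^ 2 + y t ^ 2) with hs₁
    set s₂ : ℝ := Real.sqrt ((x t - d) ^ 2 + y t ^ 2) with hs₂
    have hs₁pos : 0 < s₁ := Real.sqrt_pos.2 hu
    have hs₂pos : 0 < s₂ := Real.sqrt_pos.2 hv
    have hs₁sq : s₁ ^ 2 = (x t + d) ^ 2 + y t ^ 2 := Real.sq_sqrt hu.le
    have hs₂sq : s₂ ^ 2 = (x t - d) ^ 2 + y t ^ 2 := Real.sq_sqrt hv.le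
    have hcube₁ : ((x t + d) ^ 2 + y t ^ 2) ^ ((3 : ℝ) / 2) = s₁ ^ 3 := by
      rw [hs₁, Real.sqrt_eq_rpow, ← Real.rpow_natCast (((x t + d) ^ 2 + y t ^ 2) ^ ((1:ℝ)/2)) 3,
        ← Real.rpow_mul hu.le]
      norm_num
    have hcube₂ : ((x t - d) ^ 2 + y t ^ 2) ^ ((3 : ℝ) / 2) = s₂ ^ 3 := by
      rw [hs₂, Real.sqrt_eq_rpow, ← Real.rpow_natCast (((x t - d) ^ 2 + y t ^ 2) ^ ((1:ℝ)/2)) 3,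
        ← Real.rpow_mul hv.le]
      norm_num
    have hu' : HasDerivAt (fun τ => (x τ + d) ^ 2 + y τ ^ 2)
        (2 * (x t + d) * px t + 2 * y t * py t) t := by
      have := (((hx t).add_const d).pow 2).add ((hy t).pow 2)
      refine this.congr_deriv (Eq.symm ?_)
      push_cast; ring
    have hv' : HasDerivAt (fun τ => (x τ - d) ^ 2 + y τ ^ 2)
        (2 * (x t - d) * px t + 2 * y t * py t) t := by
      have := (((hx t).sub_const d).pow 2).add ((hy t).pow 2)
      refine this.congr_deriv (Eq.symm ?_)
      push_cast; ring
    have hsq₁ := hu'.sqrt hu.ne'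
    have hsq₂ := hv'.sqrt hv.ne'
    have main := (((((hx t).mul (hpy t)).sub ((hy t).mul (hpx t))).pow 2).const_mul
        ((1:ℝ)/2)).add (((hpx t).pow 2).const_mul ((1:ℝ)/2 * d ^ 2)) |>.add
        (((hx t).const_mul d).mul
          (((hasDerivAt_const t m₁).div hsq₁ hs₁pos.ne').sub
           ((hasDerivAt_const t m₂).div hsq₂ hs₂pos.ne')))
    rw [hG]
    refine main.congr_deriv (Eq.symm ?_)
    dsimp only [Pi.sub_apply, Pi.div_apply, Pi.mul_apply, Pi.pow_apply]
    rw [hcube₁, hcube₂, ← hs₁, ← hs₂]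
    have e₁ : m₁ / s₁ = m₁ * ((x t + d) ^ 2 + y t ^ 2) / s₁ ^ 3 := by
      rw [← hs₁sq]; field_simp
    have e₂ : m₂ / s₂ = m₂ * ((x t - d) ^ 2 + y t ^ 2) / s₂ ^ 3 := by
      rw [← hs₂sq]; field_simp
    rw [e₁, e₂]
    have h1 : s₁ ≠ 0 := hs₁pos.ne'
    have h2 : s₂ ≠ 0 := hs₂pos.ne'
    clear_value s₁ s₂
    clear hs₁ hs₂ hs₁sq hs₂sq hcube₁ hcube₂ e₁ e₂ main hsq₁ hsq₂ hu' hv' hG hu hv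
    field_simp
    ring
  exact fun t s => is_const_of_deriv_eq_zero
    (fun t => ((key t).differentiableAt)) (fun t => (key t).deriv) t s
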